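/- Let β > 0 and let r be a real number with 0 ≤ r < π/(2β). Then every λ ∈ ℂ satisfying λ + β·e^{−λ r} = 0 has Re λ < 0. -/

import Mathlib

/-- For `β > 0` and a delay `0 ≤ r < π/(2β)`, every root `λ` of the
characteristic equation `λ + β e^{-λ r} = 0` of the linearized discrete-delay replicator
equation satisfies `Re λ < 0`. -/
theorem stmt_16 (β r : ℝ) (hβ : 0 < β) (hr0 : 0 ≤ r) (hr : r < Real.pi / (2 * β)) :
    ∀ lam : ℂ, lam + (β : ℂ) * Complex.exp (-(lam * (r : ℂ))) = 0 → lam.re < 0 := by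
  intro lam heq
  set x := lam.re with hx
  set y := lam.im with hy
  have hlam : lam = -((β : ℂ) * Complex.exp (-(lam * (r : ℂ)))) := by
    linear_combination heq
  have hzre : (-(lam * (r : ℂ))).re = -(x * r) := by simp [hx]
  have hzim : (-(lam * (r : ℂ))).im = -(y * r) := by simp [hy]
  -- real part of equation
  have hre : x = -(β * (Real.exp (-(x * r)) * Real.cos (y * r))) := by
    have := congrArg Complex.re hlam
    simp only [Complex.neg_re, Complex.mul_re, Complex.ofReal_re, Complex.ofReal_im,
      Complex.exp_re, hzre, hzim, Real.cos_neg] at this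
    simpa using this
  by_contra hcon
  push_neg at hcon  -- 0 ≤ x
  have hexp_le : Real.exp (-(x * r)) ≤ 1 := by
    calc Real.exp (-(x * r)) ≤ Real.exp 0 := by
          apply Real.exp_le_exp.mpr; nlinarith
      _ = 1 := Real.exp_zero
  -- modulus
  have habs : ‖lam‖ = β * Real.exp (-(x * r)) := by
    rw [hlam]
    simp [Complex.norm_exp, hzre, abs_of_pos hβ]
  have hyle : |y| ≤ β := by
    have h1 : |y| ≤ ‖lam‖ := Complex.abs_im_le_norm lam
    have h2 : β * Real.exp (-(x * r)) ≤ β := by nlinarith [Real.exp_pos (-(x * r))]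
    linarith [habs ▸ h1]
  have hyr : |y * r| < Real.pi / 2 := by
    rw [abs_mul, abs_of_nonneg hr0]
    have hrβ : r * β < Real.pi / 2 := by
      have h := (lt_div_iff₀ (by positivity : (0:ℝ) < 2 * β)).mp hr
      nlinarith
    calc |y| * r ≤ β * r := by nlinarith [abs_nonneg y]
      _ < Real.pi / 2 := by nlinarith
  have hcos : 0 < Real.cos (y * r) := by
    apply Real.cos_pos_of_mem_Ioo
    constructor <;> [linarith [abs_lt.mp hyr |>.1]; exact abs_lt.mp hyr |>.2]
  have : x < 0 := by
    rw [hre]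
    have hep := Real.exp_pos (-(x * r))
    nlinarith [mul_pos hβ (mul_pos hep hcos)]
  linarith
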